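/- arXiv:2110.12634 — 5 statements merged into one kernel-verified Lean document; each statement's English description precedes it below -/
import Mathlib

section
/- Let (F_k)_k be a filtration on a probability space, let (V_k)_k, (U_k)_k, (Z_k)_k be nonnegative sequences of (F_k)_k-adapted integrable random processes, and let (γ_k)_k be a sequence of positive real numbers such that ∑_k Z_k < ∞ almost surely and ∏_k (1 + γ_k) < ∞. If for every k ∈ ℕ one has E[V_{k+1} | F_k] + U_{k+1} ≤ (1 + γ_k) V_k + Z_k almost surely, then the sequence (V_k)_k converges almost surely and ∑_k U_k < ∞ almost surely. -/
open MeasureTheory Filter Topology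

/-- Stopped auxiliary process: freeze `S` once we leave `G`. -/
private noncomputable def rsStopped {Ω : Type*} (S : ℕ → Ω → ℝ) (G : ℕ → Set Ω) : ℕ → Ω → ℝ
  | 0 => S 0
  | (k+1) => rsStopped S G k + (G (k+1)).indicator (fun ω => S (k+1) ω - S k ω)

/-- A supermartingale bounded below by an adapted nonnegative increasing process converges
a.e. on the set where that process stays bounded. -/
private lemma rs_key {Ω : Type*} {m0 : MeasurableSpace Ω} (μ : Measure Ω)
    [IsProbabilityMeasure μ] (ℱ : Filtration ℕ m0) (S b : ℕ → Ω → ℝ)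
    (hS : Supermartingale S ℱ μ)
    (hb : ∀ j, StronglyMeasurable[ℱ j] (b j))
    (hbnn : ∀ j ω, 0 ≤ b j ω)
    (hlb : ∀ k ω, -(∑ j ∈ Finset.range k, b j ω) ≤ S k ω) :
    ∀ᵐ ω ∂μ, (∃ r : ℝ, ∀ k, ∑ j ∈ Finset.range k, b j ω ≤ r) →
      ∃ l, Tendsto (fun k => S k ω) atTop (𝓝 l) := by
  have hmain : ∀ M : ℕ, ∀ᵐ ω ∂μ, (∀ k, ∑ j ∈ Finset.range k, b j ω ≤ (M : ℝ)) →
      ∃ l, Tendsto (fun k => S k ω) atTop (𝓝 l) := by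
    intro M
    set B : ℕ → Ω → ℝ := fun k ω => ∑ j ∈ Finset.range k, b j ω with hB
    set G : ℕ → Set Ω := fun k => {ω | ∀ i ≤ k, B i ω ≤ (M : ℝ)} with hG
    have hGanti : ∀ k, G (k+1) ⊆ G k := by
      intro k ω hω i hi
      exact hω i (hi.trans (Nat.le_succ k))
    have hBmeas : ∀ i k, i ≤ k + 1 → StronglyMeasurable[ℱ k] (B i) := by
      intro i k hik
      apply Finset.stronglyMeasurable_fun_sum
      intro j hj
      have hjk : j ≤ k := by
        have := Finset.mem_range.1 hj
        omega
      exact (hb j).mono (ℱ.mono hjk)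
    have hGmeas : ∀ k, MeasurableSet[ℱ k] (G (k+1)) := by
      intro k
      have : G (k+1) = ⋂ i, ⋂ (_ : i ≤ k + 1), {ω | B i ω ≤ (M : ℝ)} := by
        ext ω; simp [hG, Set.mem_iInter]
      rw [this]
      refine MeasurableSet.iInter fun i => MeasurableSet.iInter fun hi => ?_
      exact measurableSet_le ((hBmeas i k hi).measurable) measurable_const
    set S' : ℕ → Ω → ℝ := rsStopped S G with hS'
    have hS'succ : ∀ k, S' (k+1) =
        S' k + (G (k+1)).indicator (fun ω => S (k+1) ω - S k ω) := fun k => rfl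
    have hadp : ∀ k, StronglyMeasurable[ℱ k] (S' k) := by
      intro k
      induction k with
      | zero => exact hS.stronglyAdapted 0
      | succ k ih =>
        rw [hS'succ k]
        refine (ih.mono (ℱ.mono (Nat.le_succ k))).add ?_
        refine StronglyMeasurable.indicator ?_ ((ℱ.mono (Nat.le_succ k)) _ (hGmeas k))
        exact (hS.stronglyAdapted (k+1)).sub ((hS.stronglyAdapted k).mono (ℱ.mono (Nat.le_succ k)))
    have hint : ∀ k, Integrable (S' k) μ := by
      intro k
      induction k with
      | zero => exact hS.integrable 0
      | succ k ih =>
        rw [hS'succ k]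
        exact ih.add (((hS.integrable (k+1)).sub (hS.integrable k)).indicator
          (ℱ.le k _ (hGmeas k)))
    -- pointwise claims: on `G (k+1)` the stopped process agrees with `S`, and it is `≥ -M`.
    have hclaim : ∀ k ω, (ω ∈ G (k+1) → S' k ω = S k ω) ∧ -(M : ℝ) ≤ S' k ω := by
      intro k ω
      induction k with
      | zero =>
        constructor
        · intro _; rfl
        · have h0 := hlb 0 ω
          simp only [Finset.range_zero, Finset.sum_empty, neg_zero] at h0
          have : (0:ℝ) ≤ (M:ℝ) := Nat.cast_nonneg M
          show -(M:ℝ) ≤ S 0 ω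
          linarith
      | succ k ih =>
        by_cases hωG : ω ∈ G (k+1)
        · have heq : S' (k+1) ω = S (k+1) ω := by
            rw [hS'succ k]
            simp only [Pi.add_apply, Set.indicator_of_mem hωG]
            rw [ih.1 hωG]; ring
          constructor
          · intro _; exact heq
          · rw [heq]
            have h1 := hlb (k+1) ω
            have h2 : B (k+1) ω ≤ (M:ℝ) := hωG (k+1) le_rfl
            simp only [hB] at h2
            linarith
        · have heq : S' (k+1) ω = S' k ω := by
            rw [hS'succ k]
            simp only [Pi.add_apply, Set.indicator_of_notMem hωG, add_zero]
          constructor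
          · intro hmem; exact absurd (hGanti (k+1) hmem) hωG
          · rw [heq]; exact ih.2
    have hS'super : Supermartingale S' ℱ μ := by
      refine supermartingale_nat (fun k => hadp k) hint ?_
      intro k
      have h1 : μ[S' (k+1)|ℱ k] =ᵐ[μ]
          μ[S' k|ℱ k] + μ[(G (k+1)).indicator (fun ω => S (k+1) ω - S k ω)|ℱ k] := by
        rw [hS'succ k]
        exact condExp_add (hint k)
          (((hS.integrable (k+1)).sub (hS.integrable k)).indicator (ℱ.le k _ (hGmeas k))) _
      have h2 : μ[S' k|ℱ k] = S' k :=
        condExp_of_stronglyMeasurable (ℱ.le k) (hadp k) (hint k)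
      have h3 : μ[(G (k+1)).indicator (fun ω => S (k+1) ω - S k ω)|ℱ k] =ᵐ[μ]
          (G (k+1)).indicator (μ[(fun ω => S (k+1) ω - S k ω)|ℱ k]) :=
        condExp_indicator ((hS.integrable (k+1)).sub (hS.integrable k)) (hGmeas k)
      have h4 : μ[(fun ω => S (k+1) ω - S k ω)|ℱ k] =ᵐ[μ]
          fun ω => (μ[S (k+1)|ℱ k]) ω - S k ω := by
        refine (condExp_sub (hS.integrable (k+1)) (hS.integrable k) _).trans ?_
        have hSk : μ[S k|ℱ k] = S k :=
          condExp_of_stronglyMeasurable (ℱ.le k) (hS.stronglyAdapted k) (hS.integrable k)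
        rw [hSk]
        exact Filter.EventuallyEq.rfl
      have h5 : μ[S (k+1)|ℱ k] ≤ᵐ[μ] S k := hS.2.1 k (k+1) (Nat.le_succ k)
      filter_upwards [h1, h3, h4, h5] with ω hω1 hω3 hω4 hω5
      have hind : (G (k+1)).indicator (μ[(fun ω => S (k+1) ω - S k ω)|ℱ k]) ω ≤ 0 := by
        by_cases hωG : ω ∈ G (k+1)
        · rw [Set.indicator_of_mem hωG, hω4]
          linarith
        · rw [Set.indicator_of_notMem hωG]
      calc (μ[S' (k+1)|ℱ k]) ω
          = (μ[S' k|ℱ k]) ω + (μ[(G (k+1)).indicator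
              (fun ω => S (k+1) ω - S k ω)|ℱ k]) ω := hω1
        _ ≤ S' k ω + 0 := by rw [h2, hω3]; exact add_le_add le_rfl hind
        _ = S' k ω := add_zero _
    -- L¹ boundedness of the stopped process
    have hmean : ∀ k, ∫ ω, S' k ω ∂μ ≤ ∫ ω, S' 0 ω ∂μ := by
      intro k
      have h := hS'super.2.1 0 k (Nat.zero_le k)
      have hInt : ∫ ω, (μ[S' k|ℱ 0]) ω ∂μ = ∫ ω, S' k ω ∂μ := integral_condExp (ℱ.le 0)
      rw [← hInt]
      exact integral_mono_ae integrable_condExp (hint 0) h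
    set C : ℝ := ∫ ω, S' 0 ω ∂μ + 2 * M with hC
    have habs : ∀ k ω, |S' k ω| ≤ S' k ω + 2 * M := by
      intro k ω
      have := (hclaim k ω).2
      rcases abs_cases (S' k ω) with ⟨h, _⟩ | ⟨h, _⟩ <;> rw [h] <;> nlinarith [Nat.cast_nonneg (α := ℝ) M]
    have hbdd : ∀ k, eLpNorm (S' k) 1 μ ≤ ENNReal.ofReal C := by
      intro k
      rw [eLpNorm_one_eq_lintegral_enorm, ← ofReal_integral_norm_eq_lintegral_enorm (hint k)]
      apply ENNReal.ofReal_le_ofReal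
      have h1 : ∫ ω, ‖S' k ω‖ ∂μ ≤ ∫ ω, (S' k ω + 2 * M) ∂μ := by
        apply integral_mono (hint k).norm ((hint k).add (integrable_const _))
        intro ω; exact habs k ω
      have h2 : ∫ ω, (S' k ω + 2 * M) ∂μ = ∫ ω, S' k ω ∂μ + 2 * M := by
        rw [integral_add (hint k) (integrable_const _), integral_const]
        simp
      calc ∫ ω, ‖S' k ω‖ ∂μ ≤ ∫ ω, S' k ω ∂μ + 2 * M := by rw [← h2]; exact h1
        _ ≤ C := by rw [hC]; linarith [hmean k]
    have hconv : ∀ᵐ ω ∂μ, ∃ c, Tendsto (fun n => S' n ω) atTop (𝓝 c) := by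
      have hsub : Submartingale (-S') ℱ μ := hS'super.neg
      have hbdd' : ∀ n, eLpNorm ((-S') n) 1 μ ≤ (ENNReal.ofReal C).toNNReal := by
        intro n
        have : eLpNorm ((-S') n) 1 μ = eLpNorm (S' n) 1 μ := eLpNorm_neg (S' n) 1 μ
        rw [this, ENNReal.coe_toNNReal (by simp : ENNReal.ofReal C ≠ ⊤)]
        exact hbdd n
      filter_upwards [hsub.exists_ae_tendsto_of_bdd hbdd'] with ω ⟨c, hc⟩
      refine ⟨-c, ?_⟩
      have : (fun n => S' n ω) = fun n => -((-S') n ω) := by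
        funext n; simp
      rw [this]
      exact hc.neg
    filter_upwards [hconv] with ω hω hM
    obtain ⟨c, hc⟩ := hω
    refine ⟨c, ?_⟩
    have hGall : ∀ k, ω ∈ G k := fun k i _ => hM i
    have : ∀ k, S' k ω = S k ω := fun k => (hclaim k ω).1 (hGall (k+1))
    exact hc.congr fun k => this k
  have hall : ∀ᵐ ω ∂μ, ∀ M : ℕ, (∀ k, ∑ j ∈ Finset.range k, b j ω ≤ (M : ℝ)) →
      ∃ l, Tendsto (fun k => S k ω) atTop (𝓝 l) := ae_all_iff.2 hmain
  filter_upwards [hall] with ω hω hr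
  obtain ⟨r, hr⟩ := hr
  exact hω ⌈r⌉₊ fun k => (hr k).trans (Nat.le_ceil r)
/-- Robbins–Siegmund almost-supermartingale convergence lemma. -/
theorem robbins_siegmund
    {Ω : Type*} {m0 : MeasurableSpace Ω} (μ : Measure Ω) [IsProbabilityMeasure μ]
    (ℱ : Filtration ℕ m0)
    (V U Z : ℕ → Ω → ℝ) (γ : ℕ → ℝ)
    (hVadapted : Adapted ℱ V) (hUadapted : Adapted ℱ U) (hZadapted : Adapted ℱ Z)
    (hVnonneg : ∀ k ω, 0 ≤ V k ω) (hUnonneg : ∀ k ω, 0 ≤ U k ω)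
    (hZnonneg : ∀ k ω, 0 ≤ Z k ω)
    (hVint : ∀ k, Integrable (V k) μ) (hUint : ∀ k, Integrable (U k) μ)
    (hZint : ∀ k, Integrable (Z k) μ)
    (hγpos : ∀ k, 0 < γ k)
    (hZsum : ∀ᵐ ω ∂μ, Summable (fun k => Z k ω))
    (hγprod : Multipliable (fun k => 1 + γ k))
    (hrec : ∀ k, ∀ᵐ ω ∂μ,
      (μ[V (k + 1) | ℱ k]) ω + U (k + 1) ω ≤ (1 + γ k) * V k ω + Z k ω) :
    ∀ᵐ ω ∂μ, (∃ l : ℝ, Tendsto (fun k => V k ω) atTop (𝓝 l)) ∧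
      Summable (fun k => U k ω) := by
  have hγnn : ∀ j, (1:ℝ) ≤ 1 + γ j := fun j => by linarith [hγpos j]
  set a : ℕ → ℝ := fun k => ∏ j ∈ Finset.range k, (1 + γ j) with ha
  have ha1 : ∀ k, 1 ≤ a k := fun k => by
    simp only [ha]
    have := Finset.prod_le_prod (s := Finset.range k) (f := fun _ => (1:ℝ))
      (g := fun j => 1 + γ j) (fun j _ => by norm_num) (fun j _ => hγnn j)
    simpa using this
  have hapos : ∀ k, 0 < a k := fun k => lt_of_lt_of_le one_pos (ha1 k)
  have hane : ∀ k, a k ≠ 0 := fun k => (hapos k).ne'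
  have hasucc : ∀ k, a (k+1) = a k * (1 + γ k) := fun k => by
    simp only [ha]; exact Finset.prod_range_succ _ k
  have hamono : Monotone a := monotone_nat_of_le_succ fun k => by
    rw [hasucc k]; exact le_mul_of_one_le_right (hapos k).le (hγnn k)
  set A : ℝ := ∏' j, (1 + γ j) with hA
  have hatend : Tendsto a atTop (𝓝 A) := by
    simp only [ha, hA]; exact hγprod.hasProd.tendsto_prod_nat
  have haA : ∀ k, a k ≤ A := fun k => hamono.ge_of_tendsto hatend k
  set P : ℕ → Ω → ℝ := fun k ω => ∑ j ∈ Finset.range k, U (j+1) ω / a (j+1) with hP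
  set Q : ℕ → Ω → ℝ := fun k ω => ∑ j ∈ Finset.range k, Z j ω / a (j+1) with hQ
  set S : ℕ → Ω → ℝ := fun k ω => V k ω / a k + P k ω - Q k ω with hSdef
  have hPadp : ∀ k, StronglyMeasurable[ℱ k] (P k) := by
    intro k
    apply Finset.stronglyMeasurable_fun_sum
    intro j hj
    have hjk : j + 1 ≤ k := Finset.mem_range.1 hj
    simp only [div_eq_mul_inv]
    exact ((hUadapted (j+1)).stronglyMeasurable.mono (ℱ.mono hjk)).mul_const _
  have hQadp : ∀ i k, i ≤ k + 1 → StronglyMeasurable[ℱ k] (Q i) := by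
    intro i k hik
    apply Finset.stronglyMeasurable_fun_sum
    intro j hj
    have hjk : j ≤ k := by
      have := Finset.mem_range.1 hj
      omega
    simp only [div_eq_mul_inv]
    exact ((hZadapted j).stronglyMeasurable.mono (ℱ.mono hjk)).mul_const _
  have hadp : ∀ k, StronglyMeasurable[ℱ k] (S k) := by
    intro k
    have hV : StronglyMeasurable[ℱ k] (fun ω => V k ω / a k) := by
      simp only [div_eq_mul_inv]
      exact (hVadapted k).stronglyMeasurable.mul_const _
    exact (hV.add (hPadp k)).sub (hQadp k k (Nat.le_succ k))
  have hPint : ∀ k, Integrable (P k) μ := by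
    intro k
    apply integrable_finset_sum
    intro j hj
    exact (hUint (j+1)).div_const _
  have hQint : ∀ k, Integrable (Q k) μ := by
    intro k
    apply integrable_finset_sum
    intro j hj
    exact (hZint j).div_const _
  have hSint : ∀ k, Integrable (S k) μ := by
    intro k
    exact (((hVint k).div_const _).add (hPint k)).sub (hQint k)
  have hcond : ∀ k, μ[S (k+1)|ℱ k] ≤ᵐ[μ] S k := by
    intro k
    -- conditioned version of the recursion
    have hfint : Integrable (fun ω => (μ[V (k+1)|ℱ k]) ω + U (k + 1) ω) μ :=
      integrable_condExp.add (hUint (k+1))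
    have hgint : Integrable (fun ω => (1 + γ k) * V k ω + Z k ω) μ :=
      ((hVint k).const_mul _).add (hZint k)
    have hrec' : (fun ω => (μ[V (k+1)|ℱ k]) ω + (μ[U (k+1)|ℱ k]) ω) ≤ᵐ[μ]
        fun ω => (1 + γ k) * V k ω + Z k ω := by
      have hmono := condExp_mono (m := ℱ k) hfint hgint (hrec k)
      have hL : μ[(fun ω => (μ[V (k+1)|ℱ k]) ω + U (k + 1) ω)|ℱ k] =ᵐ[μ]
          fun ω => (μ[V (k+1)|ℱ k]) ω + (μ[U (k+1)|ℱ k]) ω := by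
        refine (condExp_add integrable_condExp (hUint (k+1)) _).trans ?_
        have hcc : μ[μ[V (k+1)|ℱ k]|ℱ k] = μ[V (k+1)|ℱ k] :=
          condExp_of_stronglyMeasurable (ℱ.le k) stronglyMeasurable_condExp integrable_condExp
        rw [hcc]
        exact Filter.EventuallyEq.rfl
      have hR : μ[(fun ω => (1 + γ k) * V k ω + Z k ω)|ℱ k]
          = fun ω => (1 + γ k) * V k ω + Z k ω :=
        condExp_of_stronglyMeasurable (ℱ.le k)
          (((hVadapted k).stronglyMeasurable.const_mul _).add (hZadapted k).stronglyMeasurable) hgint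
      calc (fun ω => (μ[V (k+1)|ℱ k]) ω + (μ[U (k+1)|ℱ k]) ω)
          =ᵐ[μ] μ[(fun ω => (μ[V (k+1)|ℱ k]) ω + U (k + 1) ω)|ℱ k] := hL.symm
        _ ≤ᵐ[μ] μ[(fun ω => (1 + γ k) * V k ω + Z k ω)|ℱ k] := hmono
        _ =ᵐ[μ] fun ω => (1 + γ k) * V k ω + Z k ω := by rw [hR]
    -- decomposition of S (k+1)
    have hWint : Integrable (fun ω => V (k+1) ω + U (k+1) ω) μ := (hVint _).add (hUint _)
    have hgkint : Integrable (fun ω => P k ω - Q (k+1) ω) μ := (hPint k).sub (hQint (k+1))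
    have hSeq : S (k+1) = (a (k+1))⁻¹ • (fun ω => V (k+1) ω + U (k+1) ω)
        + fun ω => P k ω - Q (k+1) ω := by
      funext ω
      simp only [hSdef, hP, Pi.add_apply, Pi.smul_apply, smul_eq_mul,
        Finset.sum_range_succ]
      field_simp
      ring
    have hdecomp : μ[S (k+1)|ℱ k] =ᵐ[μ] fun ω =>
        (a (k+1))⁻¹ * ((μ[V (k+1)|ℱ k]) ω + (μ[U (k+1)|ℱ k]) ω) + (P k ω - Q (k+1) ω) := by
      rw [hSeq]
      refine (condExp_add (hWint.smul _) hgkint _).trans ?_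
      have h1 : μ[(a (k+1))⁻¹ • (fun ω => V (k+1) ω + U (k+1) ω)|ℱ k] =ᵐ[μ]
          (a (k+1))⁻¹ • μ[(fun ω => V (k+1) ω + U (k+1) ω)|ℱ k] := condExp_smul _ _ _
      have h2 : μ[(fun ω => V (k+1) ω + U (k+1) ω)|ℱ k] =ᵐ[μ]
          μ[V (k+1)|ℱ k] + μ[U (k+1)|ℱ k] := condExp_add (hVint _) (hUint _) _
      have h3 : μ[(fun ω => P k ω - Q (k+1) ω)|ℱ k] = fun ω => P k ω - Q (k+1) ω := by
        apply condExp_of_stronglyMeasurable (ℱ.le k) _ hgkint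
        exact (hPadp k).sub (hQadp (k+1) k le_rfl)
      rw [h3]
      filter_upwards [h1, h2] with ω hω1 hω2
      simp only [Pi.add_apply, Pi.smul_apply, smul_eq_mul] at *
      rw [hω1, hω2]
    filter_upwards [hdecomp, hrec'] with ω hω1 hω2
    rw [hω1]
    have hc : (0:ℝ) < a (k+1) := hapos (k+1)
    have step1 : (a (k+1))⁻¹ * ((μ[V (k+1)|ℱ k]) ω + (μ[U (k+1)|ℱ k]) ω)
        ≤ (a (k+1))⁻¹ * ((1 + γ k) * V k ω + Z k ω) :=
      mul_le_mul_of_nonneg_left hω2 (inv_nonneg.2 hc.le)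
    have step2 : (a (k+1))⁻¹ * ((1 + γ k) * V k ω + Z k ω) + (P k ω - Q (k+1) ω) = S k ω := by
      have h1 : (1:ℝ) + γ k ≠ 0 := by
        have : (0:ℝ) < 1 + γ k := by linarith [hγpos k]
        exact this.ne'
      have key : (1 + γ k) * V k ω / (a k * (1 + γ k)) = V k ω / a k := by
        rw [mul_comm (a k) (1 + γ k)]
        exact mul_div_mul_left _ _ h1
      have e1 : (a (k+1))⁻¹ * ((1 + γ k) * V k ω + Z k ω)
          = V k ω / a k + Z k ω / a (k+1) := by
        rw [hasucc k, inv_mul_eq_div, add_div, key]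
      have hQs : Q (k+1) ω = Q k ω + Z k ω / a (k+1) := by
        simp only [hQ, Finset.sum_range_succ]
      rw [e1, hQs]
      simp only [hSdef]
      ring
    linarith [step1]
  have hSsuper : Supermartingale S ℱ μ := supermartingale_nat hadp hSint hcond
  set b : ℕ → Ω → ℝ := fun j ω => Z j ω / a (j+1) with hb
  have hbmeas : ∀ j, StronglyMeasurable[ℱ j] (b j) := by
    intro j
    simp only [hb, div_eq_mul_inv]
    exact (hZadapted j).stronglyMeasurable.mul_const _
  have hbnn : ∀ j ω, 0 ≤ b j ω := fun j ω => div_nonneg (hZnonneg j ω) (hapos (j+1)).le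
  have hlb : ∀ k ω, -(∑ j ∈ Finset.range k, b j ω) ≤ S k ω := by
    intro k ω
    have h1 : 0 ≤ V k ω / a k := div_nonneg (hVnonneg k ω) (hapos k).le
    have h2 : 0 ≤ P k ω := Finset.sum_nonneg fun j _ =>
      div_nonneg (hUnonneg _ ω) (hapos _).le
    have h3 : Q k ω = ∑ j ∈ Finset.range k, b j ω := rfl
    simp only [hSdef]
    rw [← h3]
    linarith
  filter_upwards [rs_key μ ℱ S b hSsuper hbmeas hbnn hlb, hZsum] with ω hkey hZω
  have hbsum : Summable (fun j => b j ω) := by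
    refine Summable.of_nonneg_of_le (fun j => hbnn j ω) (fun j => ?_) hZω
    exact div_le_self (hZnonneg j ω) (ha1 (j+1))
  have hQle : ∀ k, Q k ω ≤ ∑' j, b j ω := fun k =>
    Summable.sum_le_tsum _ (fun j _ => hbnn j ω) hbsum
  obtain ⟨l, hl⟩ := hkey ⟨∑' j, b j ω, hQle⟩
  have hQtend : Tendsto (fun k => Q k ω) atTop (𝓝 (∑' j, b j ω)) :=
    hbsum.hasSum.tendsto_sum_nat
  obtain ⟨c, hc⟩ := (hl.add hQtend).bddAbove_range
  have hPle : ∀ k, P k ω ≤ c := by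
    intro k
    have h1 : 0 ≤ V k ω / a k := div_nonneg (hVnonneg k ω) (hapos k).le
    have h2 : P k ω ≤ S k ω + Q k ω := by simp only [hSdef]; linarith
    exact h2.trans (hc (Set.mem_range_self k))
  have hPsum : Summable (fun j => U (j+1) ω / a (j+1)) :=
    summable_of_sum_range_le (fun j => div_nonneg (hUnonneg _ ω) (hapos _).le) hPle
  have hPtend : Tendsto (fun k => P k ω) atTop (𝓝 (∑' j, U (j+1) ω / a (j+1))) :=
    hPsum.hasSum.tendsto_sum_nat
  constructor
  · refine ⟨(l - (∑' j, U (j+1) ω / a (j+1)) + ∑' j, b j ω) * A, ?_⟩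
    have hVdiv : Tendsto (fun k => V k ω / a k) atTop
        (𝓝 (l - (∑' j, U (j+1) ω / a (j+1)) + ∑' j, b j ω)) := by
      have heq : (fun k => V k ω / a k) = fun k => S k ω - P k ω + Q k ω := by
        funext k; simp only [hSdef]; ring
      rw [heq]
      exact (hl.sub hPtend).add hQtend
    have heq2 : (fun k => V k ω) = fun k => (V k ω / a k) * a k := by
      funext k; rw [div_mul_cancel₀ _ (hane k)]
    rw [heq2]
    exact hVdiv.mul hatend
  · have h1 : Summable (fun j => U (j+1) ω) := by
      refine Summable.of_nonneg_of_le (fun j => hUnonneg _ ω) (fun j => ?_)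
        (hPsum.mul_right A)
      calc U (j+1) ω = (U (j+1) ω / a (j+1)) * a (j+1) := by
            rw [div_mul_cancel₀ _ (hane (j+1))]
        _ ≤ (U (j+1) ω / a (j+1)) * A :=
            mul_le_mul_of_nonneg_left (haA (j+1)) (div_nonneg (hUnonneg _ ω) (hapos _).le)
    exact (summable_nat_add_iff 1).1 h1
end

section
/- Let f : ℝ^d → ℝ be L-smooth (its gradient is L-Lipschitz) with infimum value f_* attained at some minimizer. Let x ∈ ℝ^d, let g be a square-integrable random vector in ℝ^d with E[g] = ∇f(x) and E[‖g‖²] ≤ A(f(x) − f_*) + B‖∇f(x)‖² + C for constants A, B, C ≥ 0, let u > 0 and η > 0 be scalars, and set x⁺ = x − η u g. Then E[f(x⁺) − f_*] + (η/2)(2u − u² L B η) ‖∇f(x)‖² ≤ (1 + u² η² A L)(f(x) − f_*) + (u² η² L C)/2. -/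
open MeasureTheory


lemma descent_lemma {d : ℕ} (f : EuclideanSpace ℝ (Fin d) → ℝ) (L : ℝ) (hL : 0 ≤ L)
    (hdiff : Differentiable ℝ f)
    (hlip : LipschitzWith L.toNNReal (fun y => gradient f y))
    (x v : EuclideanSpace ℝ (Fin d)) :
    f (x + v) ≤ f x + inner ℝ (gradient f x) v + L / 2 * ‖v‖ ^ 2 := by
  set φ : ℝ → ℝ := fun t => f (x + t • v) with hφ
  have hline : ∀ t : ℝ, HasDerivAt (fun s : ℝ => x + s • v) v t := by
    intro t
    simpa using ((hasDerivAt_id t).smul_const v).const_add x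
  have hderiv : ∀ t : ℝ, HasDerivAt φ (inner ℝ (gradient f (x + t • v)) v : ℝ) t := by
    intro t
    have h1 : HasGradientAt f (gradient f (x + t • v)) (x + t • v) :=
      (hdiff (x + t • v)).hasGradientAt
    have h2 := h1.hasFDerivAt.comp_hasDerivAt t (hline t)
    simpa [hφ, Function.comp_def] using h2
  have hcont : Continuous fun t : ℝ => (inner ℝ (gradient f (x + t • v)) v : ℝ) := by
    apply Continuous.inner
    · exact hlip.continuous.comp (by continuity)
    · exact continuous_const
  have hFTC : φ 1 - φ 0 = ∫ t in (0:ℝ)..1, inner ℝ (gradient f (x + t • v)) v := by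
    symm
    apply intervalIntegral.integral_eq_sub_of_hasDerivAt
    · intro t _; exact hderiv t
    · exact (hcont.intervalIntegrable 0 1)
  have hbound : ∀ t ∈ Set.Icc (0:ℝ) 1,
      (inner ℝ (gradient f (x + t • v)) v : ℝ) ≤ inner ℝ (gradient f x) v + L * t * ‖v‖ ^ 2 := by
    intro t ht
    have h1 : (inner ℝ (gradient f (x + t • v)) v : ℝ) - inner ℝ (gradient f x) v
        = inner ℝ (gradient f (x + t • v) - gradient f x) v := by
      rw [inner_sub_left]
    have h2 : (inner ℝ (gradient f (x + t • v) - gradient f x) v : ℝ)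
        ≤ ‖gradient f (x + t • v) - gradient f x‖ * ‖v‖ := real_inner_le_norm _ _
    have h3 : ‖gradient f (x + t • v) - gradient f x‖ ≤ L * (t * ‖v‖) := by
      have := hlip.dist_le_mul (x + t • v) x
      rw [Real.coe_toNNReal L hL] at this
      have hd : dist (x + t • v) x = t * ‖v‖ := by
        rw [dist_eq_norm]
        simp [norm_smul, abs_of_nonneg ht.1]
      rwa [hd, dist_eq_norm] at this
    nlinarith [norm_nonneg v, mul_le_mul_of_nonneg_right h3 (norm_nonneg v)]
  have hIB : (∫ t in (0:ℝ)..1, inner ℝ (gradient f (x + t • v)) v : ℝ)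
      ≤ ∫ t in (0:ℝ)..1, (inner ℝ (gradient f x) v + L * t * ‖v‖ ^ 2) := by
    apply intervalIntegral.integral_mono_on zero_le_one
      (hcont.intervalIntegrable 0 1)
      ((by continuity : Continuous fun t : ℝ => (inner ℝ (gradient f x) v + L * t * ‖v‖ ^ 2 : ℝ)).intervalIntegrable 0 1)
    exact hbound
  have hRHS : (∫ t in (0:ℝ)..1, (inner ℝ (gradient f x) v + L * t * ‖v‖ ^ 2) : ℝ)
      = inner ℝ (gradient f x) v + L / 2 * ‖v‖ ^ 2 := by
    have heq : (fun t : ℝ => (inner ℝ (gradient f x) v + L * t * ‖v‖ ^ 2 : ℝ))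
        = fun t : ℝ => (inner ℝ (gradient f x) v : ℝ) + (L * ‖v‖ ^ 2) * t := by
      funext t; ring
    rw [intervalIntegral.integral_congr (g := fun t : ℝ => (inner ℝ (gradient f x) v : ℝ) + (L * ‖v‖ ^ 2) * t) (fun t _ => by ring),
      intervalIntegral.integral_add intervalIntegrable_const
        (by apply Continuous.intervalIntegrable; fun_prop),
      intervalIntegral.integral_const_mul, integral_id]
    simp; ring
  have : φ 1 - φ 0 ≤ inner ℝ (gradient f x) v + L / 2 * ‖v‖ ^ 2 := by
    rw [hFTC]; exact hIB.trans (le_of_eq hRHS)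
  have h0 : φ 0 = f x := by simp [hφ]
  have h1 : φ 1 = f (x + v) := by simp [hφ]
  rw [h0, h1] at this
  linarith

/-- One-step descent inequality for SGD with a multiplicatively perturbed
learning rate, under expected smoothness. -/
theorem sgd_one_step_descent
    {d : ℕ} {Ω : Type*} [MeasurableSpace Ω] (μ : Measure Ω) [IsProbabilityMeasure μ]
    (f : EuclideanSpace ℝ (Fin d) → ℝ) (L A B C fstar : ℝ)
    (xstar x : EuclideanSpace ℝ (Fin d))
    (hL : 0 < L) (hA : 0 ≤ A) (hB : 0 ≤ B) (hC : 0 ≤ C)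
    (hdiff : Differentiable ℝ f)
    (hlip : LipschitzWith L.toNNReal (fun y => gradient f y))
    (hstar : f xstar = fstar) (hmin : ∀ y, fstar ≤ f y)
    (g : Ω → EuclideanSpace ℝ (Fin d))
    (hgmeas : Measurable g)
    (hgint : Integrable g μ)
    (hgsq : Integrable (fun ω => ‖g ω‖ ^ 2) μ)
    (hmean : ∫ ω, g ω ∂μ = gradient f x)
    (hES : ∫ ω, ‖g ω‖ ^ 2 ∂μ ≤ A * (f x - fstar) + B * ‖gradient f x‖ ^ 2 + C)
    (u η : ℝ) (hu : 0 < u) (hη : 0 < η) :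
    (∫ ω, (f (x - (η * u) • g ω) - fstar) ∂μ)
        + (η / 2) * (2 * u - u ^ 2 * L * B * η) * ‖gradient f x‖ ^ 2
      ≤ (1 + u ^ 2 * η ^ 2 * A * L) * (f x - fstar) + u ^ 2 * η ^ 2 * L * C / 2 := by
  set G := gradient f x with hG
  set h : Ω → ℝ := fun ω =>
    (f x - fstar) - (η * u) * inner ℝ G (g ω) + L / 2 * (η * u) ^ 2 * ‖g ω‖ ^ 2 with hh
  have hinner_int : Integrable (fun ω => (inner ℝ G (g ω) : ℝ)) μ := hgint.const_inner G
  have hhint : Integrable h μ := by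
    apply Integrable.add
    · exact (integrable_const _).sub (hinner_int.const_mul _)
    · exact hgsq.const_mul _
  have hptwise : ∀ ω, f (x - (η * u) • g ω) - fstar ≤ h ω := by
    intro ω
    have := descent_lemma f L hL.le hdiff hlip x (-((η * u) • g ω))
    have heq : x + -((η * u) • g ω) = x - (η * u) • g ω := by abel
    rw [heq] at this
    have h2 : (inner ℝ G (-((η * u) • g ω)) : ℝ) = -((η * u) * inner ℝ G (g ω)) := by
      rw [inner_neg_right, real_inner_smul_right]
    have h3 : ‖-((η * u) • g ω)‖ ^ 2 = (η * u) ^ 2 * ‖g ω‖ ^ 2 := by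
      rw [norm_neg, norm_smul]
      simp [mul_pow, sq_abs]
    rw [h2, h3] at this
    simp only [hh]
    linarith
  have hmono : (∫ ω, (f (x - (η * u) • g ω) - fstar) ∂μ) ≤ ∫ ω, h ω ∂μ := by
    apply integral_mono_of_nonneg
    · exact Filter.Eventually.of_forall fun ω => sub_nonneg.2 (hmin _)
    · exact hhint
    · exact Filter.Eventually.of_forall hptwise
  have hinteg : ∫ ω, h ω ∂μ
      = (f x - fstar) - (η * u) * ‖G‖ ^ 2 + L / 2 * (η * u) ^ 2 * ∫ ω, ‖g ω‖ ^ 2 ∂μ := by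
    have e1 : ∫ ω, h ω ∂μ
        = (∫ ω, ((f x - fstar) - (η * u) * inner ℝ G (g ω)) ∂μ)
          + ∫ ω, (L / 2 * (η * u) ^ 2 * ‖g ω‖ ^ 2) ∂μ :=
      integral_add ((integrable_const _).sub (hinner_int.const_mul _)) (hgsq.const_mul _)
    have e2 : (∫ ω, ((f x - fstar) - (η * u) * inner ℝ G (g ω)) ∂μ)
        = (∫ ω, (f x - fstar : ℝ) ∂μ) - ∫ ω, ((η * u) * inner ℝ G (g ω)) ∂μ :=
      integral_sub (integrable_const _) (hinner_int.const_mul _)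
    rw [e1, e2, integral_const_mul, integral_const_mul, integral_inner hgint, hmean,
      real_inner_self_eq_norm_sq, integral_const]
    simp
  have hE : ∫ ω, ‖g ω‖ ^ 2 ∂μ ≤ A * (f x - fstar) + B * ‖G‖ ^ 2 + C := hES
  have hcoef : (0:ℝ) ≤ L / 2 * (η * u) ^ 2 := by positivity
  have hE2 := mul_le_mul_of_nonneg_left hE hcoef
  rw [hinteg] at hmono
  have hP : (0:ℝ) ≤ f x - fstar := sub_nonneg.2 (hmin x)
  have slack : L / 2 * (η * u) ^ 2 * (A * (f x - fstar))
      ≤ u ^ 2 * η ^ 2 * A * L * (f x - fstar) := by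
    have hpos : (0:ℝ) ≤ L * η ^ 2 * u ^ 2 * A * (f x - fstar) := by positivity
    nlinarith [hpos]
  have e3 : (η / 2) * (2 * u - u ^ 2 * L * B * η) * ‖G‖ ^ 2
      = η * u * ‖G‖ ^ 2 - L / 2 * (η * u) ^ 2 * (B * ‖G‖ ^ 2) := by ring
  nlinarith [hmono, hE2, slack, e3]
end

section
/- Let 0 < c_1 < 1 < c_2 satisfy c_1 ln c_1 + c_2 ln c_2 = 0 (equivalently, ln c_2 = W(−c_1 ln c_1) where W is the principal branch of the Lambert-W function), and for each integer k ≥ 0 let E[u_k] = (c_1^{1/(k+1)} + c_2^{1/(k+1)})/2 be the mean of a uniform random variable on [c_1^{1/(k+1)}, c_2^{1/(k+1)}]. Then the sequence k ↦ E[u_k] is monotone for all k ≥ 0. -/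
/-- Monotonicity of the mean of the UMSLR stochasticity factor when
`0 < c₁ < 1 < c₂` and `c₁ ln c₁ + c₂ ln c₂ = 0`, i.e.,
`ln c₂ = W(−c₁ ln c₁)` with `W` the principal branch of the Lambert-W
function. -/
theorem umslr_mean_monotone_case_c (c₁ c₂ : ℝ)
    (hc₁pos : 0 < c₁) (hc₁ : c₁ < 1) (hc₂ : 1 < c₂)
    (hW : c₁ * Real.log c₁ + c₂ * Real.log c₂ = 0) :
    Monotone (fun k : ℕ => (c₁ ^ (1 / ((k : ℝ) + 1)) + c₂ ^ (1 / ((k : ℝ) + 1))) / 2) ∨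
    Antitone (fun k : ℕ => (c₁ ^ (1 / ((k : ℝ) + 1)) + c₂ ^ (1 / ((k : ℝ) + 1))) / 2) := by
  left
  have hc₂pos : (0 : ℝ) < c₂ := lt_trans one_pos hc₂
  have hd : ∀ x : ℝ, HasDerivAt (fun x : ℝ => c₁ ^ x + c₂ ^ x)
      (c₁ ^ x * Real.log c₁ + c₂ ^ x * Real.log c₂) x := fun x =>
    ((Real.hasStrictDerivAt_const_rpow hc₁pos x).hasDerivAt).add
      ((Real.hasStrictDerivAt_const_rpow hc₂pos x).hasDerivAt)
  have hdiff : Differentiable ℝ (fun x : ℝ => c₁ ^ x + c₂ ^ x) :=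
    fun x => (hd x).differentiableAt
  have hg : AntitoneOn (fun x : ℝ => c₁ ^ x + c₂ ^ x) (Set.Iic 1) := by
    apply antitoneOn_of_deriv_nonpos (convex_Iic 1) hdiff.continuous.continuousOn
      (hdiff.differentiableOn.mono interior_subset)
    intro x hx
    rw [interior_Iic] at hx
    rw [(hd x).deriv]
    have h1 : c₁ ^ x * Real.log c₁ ≤ c₁ * Real.log c₁ := by
      have hle : c₁ ≤ c₁ ^ x := by
        have := Real.rpow_le_rpow_of_exponent_ge hc₁pos hc₁.le hx.le
        simpa using this
      exact mul_le_mul_of_nonpos_right hle (Real.log_nonpos hc₁pos.le hc₁.le)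
    have h2 : c₂ ^ x * Real.log c₂ ≤ c₂ * Real.log c₂ := by
      have hle : c₂ ^ x ≤ c₂ := by
        have := Real.rpow_le_rpow_of_exponent_le hc₂.le hx.le
        simpa using this
      exact mul_le_mul_of_nonneg_right hle (Real.log_nonneg hc₂.le)
    linarith
  intro k m hkm
  have hk1 : (0 : ℝ) < (k : ℝ) + 1 := by positivity
  have hm1 : (0 : ℝ) < (m : ℝ) + 1 := by positivity
  have htk : 1 / ((k : ℝ) + 1) ≤ 1 := by
    rw [div_le_one hk1]; linarith [Nat.cast_nonneg (α := ℝ) k]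
  have htm : 1 / ((m : ℝ) + 1) ≤ 1 := by
    rw [div_le_one hm1]; linarith [Nat.cast_nonneg (α := ℝ) m]
  have hle : 1 / ((m : ℝ) + 1) ≤ 1 / ((k : ℝ) + 1) := by
    apply one_div_le_one_div_of_le hk1
    have : (k : ℝ) ≤ m := Nat.cast_le.mpr hkm
    linarith
  have := hg (Set.mem_Iic.mpr htm) (Set.mem_Iic.mpr htk) hle
  simp only
  linarith
end

section
/- Let 0 < c_1 < 1 and c_2 > 1/c_1, and for each integer k ≥ 0 let E[u_k] = (c_1^{1/(k+1)} + c_2^{1/(k+1)})/2 be the mean of a uniform random variable on [c_1^{1/(k+1)}, c_2^{1/(k+1)}]. Then the sequence k ↦ E[u_k] is monotone for all k ≥ 0. -/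
/-- Monotonicity of the mean of the UMSLR stochasticity factor when
`0 < c₁ < 1` and `c₂ > 1/c₁`. -/
theorem umslr_mean_monotone_case_d (c₁ c₂ : ℝ)
    (hc₁pos : 0 < c₁) (hc₁ : c₁ < 1) (hc₂ : 1 / c₁ < c₂) :
    Monotone (fun k : ℕ => (c₁ ^ (1 / ((k : ℝ) + 1)) + c₂ ^ (1 / ((k : ℝ) + 1))) / 2) ∨
    Antitone (fun k : ℕ => (c₁ ^ (1 / ((k : ℝ) + 1)) + c₂ ^ (1 / ((k : ℝ) + 1))) / 2) := by
  right
  have hc₂pos : 0 < c₂ := lt_trans (by positivity) hc₂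
  intro k m hkm
  simp only
  set s : ℝ := 1 / ((m : ℝ) + 1) with hs_def
  set t : ℝ := 1 / ((k : ℝ) + 1) with ht_def
  have hmpos : (0 : ℝ) < (m : ℝ) + 1 := by positivity
  have hkpos : (0 : ℝ) < (k : ℝ) + 1 := by positivity
  have hs : 0 < s := by positivity
  have hst : s ≤ t := by
    apply one_div_le_one_div_of_le hkpos
    exact_mod_cast Nat.add_le_add_right hkm 1
  have hd : 0 ≤ t - s := by linarith
  -- abbreviations
  have hA : c₁ ^ t = c₁ ^ s * c₁ ^ (t - s) := by
    rw [← Real.rpow_add hc₁pos]; ring_nf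
  have hB : c₂ ^ t = c₂ ^ s * c₂ ^ (t - s) := by
    rw [← Real.rpow_add hc₂pos]; ring_nf
  set x := c₁ ^ (t - s) with hx_def
  have hxpos : 0 < x := Real.rpow_pos_of_pos hc₁pos _
  have hx1 : x ≤ 1 := Real.rpow_le_one (le_of_lt hc₁pos) (le_of_lt hc₁) hd
  -- c₂^(t-s) ≥ (1/c₁)^(t-s) = 1/x
  have hc₂d : 1 / x ≤ c₂ ^ (t - s) := by
    have h1 : (1 / c₁) ^ (t - s) ≤ c₂ ^ (t - s) :=
      Real.rpow_le_rpow (by positivity) (le_of_lt hc₂) hd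
    have h2 : (1 / c₁) ^ (t - s) = 1 / x := by
      rw [hx_def, Real.div_rpow (by norm_num) (le_of_lt hc₁pos), Real.one_rpow]
    linarith [h1, h2.symm.le]
  -- c₁^s ≤ c₂^s
  have hc₁c₂ : c₁ ≤ c₂ := by
    have : (1:ℝ) < 1 / c₁ := by
      rw [lt_div_iff₀ hc₁pos]; linarith
    linarith
  have hss : c₁ ^ s ≤ c₂ ^ s := Real.rpow_le_rpow (le_of_lt hc₁pos) hc₁c₂ (le_of_lt hs)
  have hspos : 0 < c₁ ^ s := Real.rpow_pos_of_pos hc₁pos _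
  -- key: 1/x - 1 ≥ 1 - x  (AM-GM)
  have hamgm : 1 - x ≤ 1 / x - 1 := by
    rw [le_sub_iff_add_le, le_div_iff₀ hxpos]
    nlinarith [sq_nonneg (x - 1)]
  have hc₂s2 : 0 < c₂ ^ s := Real.rpow_pos_of_pos hc₂pos _
  have key : c₁ ^ s * (1 - x) ≤ c₂ ^ s * (c₂ ^ (t - s) - 1) := by
    have h1 : c₁ ^ s * (1 - x) ≤ c₂ ^ s * (1 - x) :=
      mul_le_mul_of_nonneg_right hss (by linarith)
    have h2 : c₂ ^ s * (1 - x) ≤ c₂ ^ s * (c₂ ^ (t - s) - 1) := by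
      apply mul_le_mul_of_nonneg_left _ (le_of_lt hc₂s2)
      linarith
    linarith
  have goal : c₁ ^ s + c₂ ^ s ≤ c₁ ^ t + c₂ ^ t := by
    rw [hA, hB]
    nlinarith [key]
  linarith
end

section
/- Let 0 < c_1 < 1 < c_2. The function s ↦ c_1^{1/s} ln c_1 + c_2^{1/s} ln c_2, defined for s > 0, has a unique root at s̄ = (ln c_2 − ln c_1) / ln( −ln c_1 / ln c_2 ); consequently the derivative of s ↦ (c_1^{1/s} + c_2^{1/s})/2 vanishes only at s̄, and if c_1 ln c_1 + c_2 ln c_2 = 0 then s̄ = 1. -/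
/-- For `0 < c₁ < 1 < c₂`, the function `s ↦ c₁^{1/s} ln c₁ + c₂^{1/s} ln c₂`
has a unique root on `s > 0` at `s̄ = (ln c₂ − ln c₁)/ln(−ln c₁/ln c₂)`;
consequently the derivative of `s ↦ (c₁^{1/s} + c₂^{1/s})/2` vanishes on
`s > 0` only at `s̄`, and if `c₁ ln c₁ + c₂ ln c₂ = 0` then `s̄ = 1`. -/
theorem umslr_mean_derivative_unique_root (c₁ c₂ : ℝ)
    (hc₁pos : 0 < c₁) (hc₁ : c₁ < 1) (hc₂ : 1 < c₂) :
    (∀ s : ℝ, 0 < s →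
      (c₁ ^ (1 / s) * Real.log c₁ + c₂ ^ (1 / s) * Real.log c₂ = 0 ↔
        s = (Real.log c₂ - Real.log c₁) / Real.log (-Real.log c₁ / Real.log c₂))) ∧
    (∀ s : ℝ, 0 < s →
      (deriv (fun t : ℝ => (c₁ ^ (1 / t) + c₂ ^ (1 / t)) / 2) s = 0 ↔
        s = (Real.log c₂ - Real.log c₁) / Real.log (-Real.log c₁ / Real.log c₂))) ∧
    (c₁ * Real.log c₁ + c₂ * Real.log c₂ = 0 →
      (Real.log c₂ - Real.log c₁) / Real.log (-Real.log c₁ / Real.log c₂) = 1) := by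
  have hc₂pos : (0:ℝ) < c₂ := lt_trans one_pos hc₂
  have ha : Real.log c₁ < 0 := Real.log_neg hc₁pos hc₁
  have hb : 0 < Real.log c₂ := Real.log_pos hc₂
  set a := Real.log c₁ with ha_def
  set b := Real.log c₂ with hb_def
  set L := Real.log (-a / b) with hL_def
  have hna : (0:ℝ) < -a := by linarith
  have hLsub : L = Real.log (-a) - Real.log b := Real.log_div (by linarith) (by linarith)
  have key : ∀ s : ℝ, 0 < s →
      (c₁ ^ (1 / s) * a + c₂ ^ (1 / s) * b = 0 ↔ s = (b - a) / L) := by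
    intro s hs
    have h1 : c₁ ^ (1/s) = Real.exp (a * (1/s)) := Real.rpow_def_of_pos hc₁pos _
    have h2 : c₂ ^ (1/s) = Real.exp (b * (1/s)) := Real.rpow_def_of_pos hc₂pos _
    rw [h1, h2]
    constructor
    · intro h
      have heq : Real.exp (a * (1/s)) * (-a) = Real.exp (b * (1/s)) * b := by linarith
      have hlog : a * (1/s) + Real.log (-a) = b * (1/s) + Real.log b := by
        have h := congrArg Real.log heq
        rwa [Real.log_mul (Real.exp_ne_zero _) (by linarith),
            Real.log_mul (Real.exp_ne_zero _) (by linarith),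
            Real.log_exp, Real.log_exp] at h
      have hLs : L * s = b - a := by
        rw [hLsub]
        have hs' : s ≠ 0 := ne_of_gt hs
        field_simp at hlog
        nlinarith [hlog, Real.log_neg_eq_log a]
      have hLne : L ≠ 0 := by
        intro h0
        rw [h0, zero_mul] at hLs
        linarith
      rw [eq_div_iff hLne]
      linarith [hLs]
    · intro h
      have hLne : L ≠ 0 := by
        intro h0
        rw [h0, div_zero] at h
        exact absurd h (ne_of_gt hs)
      have hLs : s * L = b - a := by
        rw [h, div_mul_cancel₀ _ hLne]
      have hlog : a * (1/s) + Real.log (-a) = b * (1/s) + Real.log b := by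
        have hs' : s ≠ 0 := ne_of_gt hs
        rw [hLsub] at hLs
        field_simp
        nlinarith [hLs, Real.log_neg_eq_log a]
      have heq : Real.exp (a * (1/s)) * (-a) = Real.exp (b * (1/s)) * b := by
        have := congrArg Real.exp hlog
        rwa [Real.exp_add, Real.exp_add, Real.exp_log hna, Real.exp_log hb] at this
      linarith
  refine ⟨key, fun s hs => ?_, fun hsum => ?_⟩
  · have hs' : s ≠ 0 := ne_of_gt hs
    have hinv : HasDerivAt (fun t : ℝ => 1 / t) (-(1/s^2)) s := by
      simpa [one_div] using hasDerivAt_inv hs'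
    have hd1 : HasDerivAt (fun t : ℝ => c₁ ^ (1/t)) (c₁ ^ (1/s) * a * (-(1/s^2))) s :=
      ((Real.hasStrictDerivAt_const_rpow hc₁pos (1/s)).hasDerivAt).comp s hinv
    have hd2 : HasDerivAt (fun t : ℝ => c₂ ^ (1/t)) (c₂ ^ (1/s) * b * (-(1/s^2))) s :=
      ((Real.hasStrictDerivAt_const_rpow hc₂pos (1/s)).hasDerivAt).comp s hinv
    have hd : HasDerivAt (fun t : ℝ => (c₁ ^ (1/t) + c₂ ^ (1/t)) / 2)
        ((c₁ ^ (1/s) * a * (-(1/s^2)) + c₂ ^ (1/s) * b * (-(1/s^2))) / 2) s :=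
      (hd1.add hd2).div_const 2
    rw [hd.deriv]
    have hfac : (-(1/s^2)) ≠ 0 := neg_ne_zero.mpr (by positivity)
    constructor
    · intro h0
      have : c₁ ^ (1/s) * a + c₂ ^ (1/s) * b = 0 := by
        have h1 : (c₁ ^ (1/s) * a + c₂ ^ (1/s) * b) * (-(1/s^2)) = 0 := by linarith
        exact (mul_eq_zero.mp h1).resolve_right hfac
      exact (key s hs).mp this
    · intro h0
      have := (key s hs).mpr h0
      linarith [mul_eq_zero_of_left this (-(1/s^2))]
  · -- third part
    have hc1e : c₁ = Real.exp a := (Real.exp_log hc₁pos).symm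
    have hc2e : c₂ = Real.exp b := (Real.exp_log hc₂pos).symm
    have heq : Real.exp a * (-a) = Real.exp b * b := by
      rw [← hc1e, ← hc2e]; linarith
    have hlog : a + Real.log (-a) = b + Real.log b := by
      have h := congrArg Real.log heq
      rwa [Real.log_mul (Real.exp_ne_zero _) (by linarith),
          Real.log_mul (Real.exp_ne_zero _) (by linarith),
          Real.log_exp, Real.log_exp] at h
    have hL : L = b - a := by rw [hLsub]; linarith
    rw [hL]
    exact div_self (by linarith)
end
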